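/- Let S ≥ 1/2 with 2S ∈ ℕ and 1 ≤ n ≤ ℓ. Let Ψ: {1,…,ℓ}^n → ℂ be permutation-symmetric with ∑_X |Ψ(X)|² = 1, and let Φ be the induced function on {1,…,ℓ−n+1}^n with Φ(V(X)) = Ψ(X) for X ∈ 𝒳_{ℓ,n}. Then ∑_{A ∈ {1,…,ℓ−n+1}^n} |Φ(A)|² ≥ 1 − (1/2) ∑_{x=1}^ℓ ρ(x,x) − ∑_{x=1}^{ℓ−1} ρ(x, x+1), where ρ(x,y) = n(n−1) ∑_{x_3,…,x_n ∈ {1,…,ℓ}} |Ψ(x, y, x_3, …, x_n)|² is the two-particle density of Ψ. -/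

import Mathlib

open scoped BigOperators

noncomputable section

/-- The spin value `S = twoS / 2`. -/
def Sval (twoS : ℕ) : ℝ := twoS / 2

/-- The occupation number `n_x(X) = #{j : x_j = x}` of the site `x` in the
configuration `X` (sites are labelled `0, …, ℓ−1`). -/
def occ {n ℓ : ℕ} (X : Fin n → Fin ℓ) (x : ℕ) : ℕ :=
  (Finset.univ.filter fun j => (X j : ℕ) = x).card

/-- Permutation symmetry of an `n`-particle wave function. -/
def SymmFun {n ℓ : ℕ} (Ψ : (Fin n → Fin ℓ) → ℂ) : Prop :=
  ∀ (π : Equiv.Perm (Fin n)) (X : Fin n → Fin ℓ), Ψ (X ∘ π) = Ψ X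

/-- The square root factor `√([1 − #{k ≠ j : x_k = x}/(2S)]₊)` (note that `Real.sqrt`
of a negative number is `0`, which implements the positive part). -/
def hopCoeff (twoS : ℕ) {n ℓ : ℕ} (X : Fin n → Fin ℓ) (j : Fin n) (x : ℕ) : ℝ :=
  Real.sqrt (1 - ((Finset.univ.filter fun k => k ≠ j ∧ (X k : ℕ) = x).card : ℝ) / (twoS : ℝ))

/-- The Heisenberg energy form `E_{ℓ,n}(Ψ)` in the Holstein–Primakoff representation. -/
def Eform (twoS : ℕ) {n ℓ : ℕ} (Ψ : (Fin n → Fin ℓ) → ℂ) : ℝ :=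
  Sval twoS * ∑ j : Fin n, ∑ X : Fin n → Fin ℓ,
    if h : (X j : ℕ) + 1 < ℓ then
      ‖Ψ (Function.update X j ⟨(X j : ℕ) + 1, h⟩) * (hopCoeff twoS X j (X j : ℕ) : ℂ)
        - Ψ X * (hopCoeff twoS X j ((X j : ℕ) + 1) : ℂ)‖ ^ 2
    else 0

/-- The two-particle density `ρ(x,y) = ⟨Ψ, a†_x a†_y a_y a_x Ψ⟩`; for a permutation
symmetric normalized `Ψ` this equals `n(n−1) ∑_{x₃,…,x_n} |Ψ(x,y,x₃,…,x_n)|²`. -/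
def rho2 {n ℓ : ℕ} (Ψ : (Fin n → Fin ℓ) → ℂ) (x y : ℕ) : ℝ :=
  ∑ X : Fin n → Fin ℓ, ‖Ψ X‖ ^ 2 *
    ((Finset.univ.filter fun p : Fin n × Fin n =>
        p.1 ≠ p.2 ∧ (X p.1 : ℕ) = x ∧ (X p.2 : ℕ) = y).card : ℝ)

section SqueezeHelpers
open Finset
variable {n ℓ : ℕ}

def kcnt (X : Fin n → Fin ℓ) (i : Fin n) : ℕ :=
  (Finset.univ.filter fun j => X j < X i).card

lemma kcnt_le (X : Fin n → Fin ℓ) (hX : Function.Injective X) (i : Fin n) :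
    kcnt X i ≤ (X i : ℕ) := by
  have : kcnt X i ≤ (Finset.range (X i : ℕ)).card := by
    apply Finset.card_le_card_of_injOn (fun j => (X j : ℕ))
    · intro j hj
      simp only [kcnt, Finset.mem_coe, mem_filter] at hj ⊢
      simpa [Finset.mem_range] using hj.2
    · intro a _ b _ hab
      exact hX (Fin.val_injective hab)
  simpa using this

lemma kcnt_partition (X : Fin n → Fin ℓ) (hX : Function.Injective X) (i : Fin n) :
    kcnt X i + (Finset.univ.filter fun j => X i < X j).card + 1 = n := by
  classical
  have h1 : (Finset.univ.filter fun j => ¬ X j < X i) =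
      insert i (Finset.univ.filter fun j => X i < X j) := by
    ext j
    simp only [mem_filter, mem_insert, mem_univ, true_and, not_lt]
    constructor
    · intro h
      rcases lt_or_eq_of_le h with h' | h'
      · exact Or.inr h'
      · exact Or.inl (hX h'.symm)
    · rintro (rfl | h)
      · exact le_refl _
      · exact le_of_lt h
  have h2 := Finset.card_filter_add_card_filter_not
    (s := (Finset.univ : Finset (Fin n))) (p := fun j => X j < X i)
  rw [h1] at h2
  have h3 : i ∉ (Finset.univ.filter fun j => X i < X j) := by simp
  rw [Finset.card_insert_of_notMem h3] at h2
  simp only [Finset.card_univ, Fintype.card_fin] at h2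
  unfold kcnt
  omega

lemma sub_kcnt_le (X : Fin n → Fin ℓ) (hX : Function.Injective X) (hnℓ : n ≤ ℓ) (i : Fin n) :
    (X i : ℕ) - kcnt X i ≤ ℓ - n := by
  have hg : (Finset.univ.filter fun j => X i < X j).card ≤ ℓ - ((X i : ℕ) + 1) := by
    have : (Finset.univ.filter fun j => X i < X j).card ≤
        (Finset.Ico ((X i : ℕ) + 1) ℓ).card := by
      apply Finset.card_le_card_of_injOn (fun j => (X j : ℕ))
      · intro j hj
        simp only [Finset.mem_coe, mem_filter, mem_univ, true_and] at hj
        simp only [Finset.mem_coe, Finset.mem_Ico]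
        exact ⟨hj, (X j).isLt⟩
      · intro a _ b _ hab
        exact hX (Fin.val_injective hab)
    simpa [Nat.card_Ico] using this
  have hp := kcnt_partition X hX i
  have hi : (X i : ℕ) < ℓ := (X i).isLt
  omega

def squeeze (X : Fin n → Fin ℓ) : Fin n → Fin (ℓ - n + 1) :=
  fun i => ⟨min ((X i : ℕ) - kcnt X i) (ℓ - n), Nat.lt_succ_of_le (Nat.min_le_right _ _)⟩

lemma squeeze_val (X : Fin n → Fin ℓ) (hX : Function.Injective X) (hnℓ : n ≤ ℓ) (i : Fin n) :
    (squeeze X i : ℕ) = (X i : ℕ) - kcnt X i := by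
  simp [squeeze, Nat.min_eq_left (sub_kcnt_le X hX hnℓ i)]

lemma kcnt_mono (X : Fin n → Fin ℓ) (hX : Function.Injective X) {i j : Fin n}
    (hij : X j < X i) :
    kcnt X j < kcnt X i ∧ kcnt X i - kcnt X j ≤ (X i : ℕ) - (X j : ℕ) := by
  classical
  have hsub : (Finset.univ.filter fun m => X m < X j) ⊆
      (Finset.univ.filter fun m => X m < X i) := by
    intro m hm
    simp only [mem_filter, mem_univ, true_and] at hm ⊢
    exact hm.trans hij
  constructor
  · apply Finset.card_lt_card
    refine ⟨hsub, fun hsub' => ?_⟩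
    have : j ∈ (Finset.univ.filter fun m => X m < X j) := hsub' (by simp [hij])
    simp at this
  · have hcard : kcnt X i - kcnt X j =
        ((Finset.univ.filter fun m => X m < X i) \
          (Finset.univ.filter fun m => X m < X j)).card := by
      rw [Finset.card_sdiff_of_subset hsub]; rfl
    rw [hcard]
    have : ((Finset.univ.filter fun m => X m < X i) \
          (Finset.univ.filter fun m => X m < X j)).card ≤
        (Finset.Ico ((X j : ℕ)) ((X i : ℕ))).card := by
      apply Finset.card_le_card_of_injOn (fun m => (X m : ℕ))
      · intro m hm
        simp only [Finset.mem_coe, Finset.mem_sdiff, mem_filter, mem_univ, true_and, not_lt] at hm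
        simp only [Finset.mem_coe, Finset.mem_Ico]
        exact ⟨hm.2, hm.1⟩
      · intro a _ b _ hab
        exact hX (Fin.val_injective hab)
    simpa [Nat.card_Ico] using this

lemma consec_of_eq (X : Fin n → Fin ℓ) (hX : Function.Injective X) {i j : Fin n}
    (hij : X j < X i) (heq : (X i : ℕ) - kcnt X i = (X j : ℕ) - kcnt X j) :
    ∃ p q : Fin n, p ≠ q ∧ (X q : ℕ) = (X p : ℕ) + 1 := by
  classical
  by_cases hcase : (X i : ℕ) = (X j : ℕ) + 1
  · exact ⟨j, i, fun h => absurd (congrArg X h) (ne_of_lt hij), hcase⟩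
  obtain ⟨hk1, hk2⟩ := kcnt_mono X hX hij
  have hki := kcnt_le X hX i
  have hkj := kcnt_le X hX j
  have hvij : (X j : ℕ) < (X i : ℕ) := hij
  have hkeq : kcnt X i - kcnt X j = (X i : ℕ) - (X j : ℕ) := by omega
  -- the set of m with X j ≤ X m < X i has full cardinality, so X j + 1 is attained
  have hsub : (Finset.univ.filter fun m => X m < X j) ⊆
      (Finset.univ.filter fun m => X m < X i) := by
    intro m hm
    simp only [Finset.mem_filter, Finset.mem_univ, true_and] at hm ⊢
    exact hm.trans hij
  set s := (Finset.univ.filter fun m => X m < X i) \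
      (Finset.univ.filter fun m => X m < X j) with hs
  have hscard : s.card = (X i : ℕ) - (X j : ℕ) := by
    rw [hs, Finset.card_sdiff_of_subset hsub]
    have : kcnt X i - kcnt X j = (X i : ℕ) - (X j : ℕ) := hkeq
    unfold kcnt at this
    omega
  have himg : s.image (fun m => (X m : ℕ)) = Finset.Ico ((X j : ℕ)) ((X i : ℕ)) := by
    apply Finset.eq_of_subset_of_card_le
    · intro v hv
      simp only [Finset.mem_image] at hv
      obtain ⟨m, hm, rfl⟩ := hv
      simp only [hs, Finset.mem_sdiff, Finset.mem_filter, Finset.mem_univ, true_and,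
        not_lt] at hm
      simp only [Finset.mem_Ico]
      exact ⟨hm.2, hm.1⟩
    · rw [Finset.card_image_of_injOn (fun a _ b _ hab => hX (Fin.val_injective hab))]
      simp [Nat.card_Ico, hscard]
  have hmem : ((X j : ℕ) + 1) ∈ Finset.Ico ((X j : ℕ)) ((X i : ℕ)) := by
    simp only [Finset.mem_Ico]
    omega
  rw [← himg] at hmem
  simp only [Finset.mem_image] at hmem
  obtain ⟨m, _, hm⟩ := hmem
  exact ⟨j, m, fun h => by subst h; omega, hm⟩

lemma squeeze_lt (X : Fin n → Fin ℓ) (hX : Function.Injective X)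
    (hA : Function.Injective (squeeze X)) (hnℓ : n ≤ ℓ) {i j : Fin n}
    (hij : X j < X i) : squeeze X j < squeeze X i := by
  obtain ⟨hk1, hk2⟩ := kcnt_mono X hX hij
  have hki := kcnt_le X hX i
  have hkj := kcnt_le X hX j
  have hvij : (X j : ℕ) < (X i : ℕ) := hij
  have hle : (squeeze X j : ℕ) ≤ (squeeze X i : ℕ) := by
    rw [squeeze_val X hX hnℓ, squeeze_val X hX hnℓ]; omega
  rcases lt_or_eq_of_le hle with h | h
  · exact h
  · exfalso
    have : j = i := hA (Fin.val_injective h)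
    subst this
    exact lt_irrefl _ hij

lemma squeeze_lt_iff (X : Fin n → Fin ℓ) (hX : Function.Injective X)
    (hA : Function.Injective (squeeze X)) (hnℓ : n ≤ ℓ) (i j : Fin n) :
    X j < X i ↔ squeeze X j < squeeze X i := by
  constructor
  · exact fun h => squeeze_lt X hX hA hnℓ h
  · intro h
    rcases lt_trichotomy (X j) (X i) with h' | h' | h'
    · exact h'
    · exact absurd (congrArg (squeeze X) (hX h')) (by intro e; rw [e] at h; exact lt_irrefl _ h)
    · exact absurd (squeeze_lt X hX hA hnℓ h') (fun h'' => lt_asymm h h'')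

lemma squeeze_recover (X : Fin n → Fin ℓ) (hX : Function.Injective X)
    (hA : Function.Injective (squeeze X)) (hnℓ : n ≤ ℓ) (i : Fin n) :
    (X i : ℕ) = (squeeze X i : ℕ) +
      (Finset.univ.filter fun j => squeeze X j < squeeze X i).card := by
  have h1 : (Finset.univ.filter fun j => squeeze X j < squeeze X i) =
      (Finset.univ.filter fun j => X j < X i) := by
    apply Finset.filter_congr
    intro j _
    simp [← squeeze_lt_iff X hX hA hnℓ i j]
  rw [h1, squeeze_val X hX hnℓ]
  have := kcnt_le X hX i
  unfold kcnt at this ⊢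
  omega

lemma squeeze_injOn {X Y : Fin n → Fin ℓ} (hX : Function.Injective X)
    (hY : Function.Injective Y) (hAX : Function.Injective (squeeze X))
    (hnℓ : n ≤ ℓ) (h : squeeze X = squeeze Y) : X = Y := by
  have hAY : Function.Injective (squeeze Y) := h ▸ hAX
  funext i
  apply Fin.val_injective
  rw [squeeze_recover X hX hAX hnℓ i, squeeze_recover Y hY hAY hnℓ i, h]

lemma rho_diag_sum (Ψ : (Fin n → Fin ℓ) → ℂ) :
    ∑ x ∈ Finset.range ℓ, rho2 Ψ x x =
      ∑ X : Fin n → Fin ℓ, ‖Ψ X‖ ^ 2 *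
        ((Finset.univ.filter fun p : Fin n × Fin n =>
          p.1 ≠ p.2 ∧ X p.1 = X p.2).card : ℝ) := by
  classical
  unfold rho2
  rw [Finset.sum_comm]
  apply Finset.sum_congr rfl
  intro X _
  rw [← Finset.mul_sum]
  congr 1
  rw [← Nat.cast_sum]
  congr 1
  rw [Finset.card_eq_sum_card_fiberwise (f := fun p : Fin n × Fin n => (X p.1 : ℕ))
    (t := Finset.range ℓ) (fun p _ => by simp [(X p.1).isLt])]
  apply Finset.sum_congr rfl
  intro x _
  congr 1
  ext p
  simp only [Finset.mem_filter, Finset.mem_univ, true_and]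
  constructor
  · rintro ⟨h1, h2, h3⟩
    exact ⟨⟨h1, Fin.val_injective (show ((X p.1 : ℕ) : ℕ) = (X p.2 : ℕ) by omega)⟩, h2⟩
  · rintro ⟨⟨h1, h2⟩, h3⟩; exact ⟨h1, h3, h2 ▸ h3⟩

lemma rho_offdiag_sum (Ψ : (Fin n → Fin ℓ) → ℂ) :
    ∑ x ∈ Finset.range (ℓ - 1), rho2 Ψ x (x + 1) =
      ∑ X : Fin n → Fin ℓ, ‖Ψ X‖ ^ 2 *
        ((Finset.univ.filter fun p : Fin n × Fin n =>
          p.1 ≠ p.2 ∧ (X p.2 : ℕ) = (X p.1 : ℕ) + 1).card : ℝ) := by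
  classical
  unfold rho2
  rw [Finset.sum_comm]
  apply Finset.sum_congr rfl
  intro X _
  rw [← Finset.mul_sum]
  congr 1
  rw [← Nat.cast_sum]
  congr 1
  rw [Finset.card_eq_sum_card_fiberwise (f := fun p : Fin n × Fin n => (X p.1 : ℕ))
    (t := Finset.range (ℓ - 1)) (fun p hp => by
      simp only [Finset.mem_coe, Finset.mem_filter, Finset.mem_univ, true_and] at hp
      have := (X p.2).isLt
      simp only [Finset.mem_coe, Finset.mem_range]
      omega)]
  apply Finset.sum_congr rfl
  intro x _
  congr 1
  ext p
  simp only [Finset.mem_filter, Finset.mem_univ, true_and]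
  constructor
  · rintro ⟨h1, h2, h3⟩; exact ⟨⟨h1, by omega⟩, h2⟩
  · rintro ⟨⟨h1, h2⟩, h3⟩; exact ⟨h1, h3, by omega⟩


lemma two_le_diag_card {X : Fin n → Fin ℓ} (hX : ¬ Function.Injective X) :
    2 ≤ (Finset.univ.filter fun p : Fin n × Fin n =>
      p.1 ≠ p.2 ∧ X p.1 = X p.2).card := by
  classical
  obtain ⟨p, q, hpq, hne⟩ := Function.not_injective_iff.mp hX
  have hsub : ({(p, q), (q, p)} : Finset (Fin n × Fin n)) ⊆
      Finset.univ.filter fun r : Fin n × Fin n => r.1 ≠ r.2 ∧ X r.1 = X r.2 := by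
    intro r hr
    simp only [Finset.mem_insert, Finset.mem_singleton] at hr
    rcases hr with rfl | rfl
    · simp only [Finset.mem_filter, Finset.mem_univ, true_and]; exact ⟨hne, hpq⟩
    · simp only [Finset.mem_filter, Finset.mem_univ, true_and]
      exact ⟨fun h => hne h.symm, hpq.symm⟩
  have h2 : ({(p, q), (q, p)} : Finset (Fin n × Fin n)).card = 2 :=
    Finset.card_pair (by simp only [ne_eq, Prod.mk.injEq, not_and]; intro h _; exact hne h)
  rw [← h2]
  exact Finset.card_le_card hsub

lemma one_le_offdiag_card {X : Fin n → Fin ℓ} (hX : Function.Injective X)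
    (hA : ¬ Function.Injective (squeeze X)) (hnℓ : n ≤ ℓ) :
    1 ≤ (Finset.univ.filter fun p : Fin n × Fin n =>
      p.1 ≠ p.2 ∧ (X p.2 : ℕ) = (X p.1 : ℕ) + 1).card := by
  classical
  obtain ⟨i, j, hij, hne⟩ := Function.not_injective_iff.mp hA
  have hval : (X i : ℕ) - kcnt X i = (X j : ℕ) - kcnt X j := by
    rw [← squeeze_val X hX hnℓ, ← squeeze_val X hX hnℓ, hij]
  have hcons : ∃ p q : Fin n, p ≠ q ∧ (X q : ℕ) = (X p : ℕ) + 1 := by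
    rcases lt_trichotomy (X i) (X j) with h | h | h
    · exact consec_of_eq X hX h hval.symm
    · exact absurd (hX h) hne
    · exact consec_of_eq X hX h hval
  obtain ⟨p, q, hpq, hc⟩ := hcons
  apply Finset.card_pos.mpr
  exact ⟨(p, q), by simp [hpq, hc]⟩

end SqueezeHelpers

/-- Norm lower bound for the squeezed wave function:
`‖Φ‖² ≥ 1 − (1/2)∑_x ρ(x,x) − ∑_x ρ(x,x+1)`. -/
theorem squeezed_norm_lower_bound (twoS : ℕ) (hS : 1 ≤ twoS)
    {n ℓ : ℕ} (hn : 1 ≤ n) (hnℓ : n ≤ ℓ)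
    (Ψ : (Fin n → Fin ℓ) → ℂ) (hΨ : SymmFun Ψ)
    (hnorm : ∑ X : Fin n → Fin ℓ, ‖Ψ X‖ ^ 2 = 1)
    (Φ : (Fin n → Fin (ℓ - n + 1)) → ℂ)
    (hΦ : ∀ X : Fin n → Fin ℓ, Function.Injective X →
      ∀ A : Fin n → Fin (ℓ - n + 1),
        (∀ i, (A i : ℕ) = (X i : ℕ) - (Finset.univ.filter fun j => X j < X i).card) →
        Φ A = Ψ X) :
    1 - (1 / 2) * (∑ x ∈ Finset.range ℓ, rho2 Ψ x x)
        - ∑ x ∈ Finset.range (ℓ - 1), rho2 Ψ x (x + 1) ≤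
      ∑ A : Fin n → Fin (ℓ - n + 1), ‖Φ A‖ ^ 2 := by
  classical
  have hΦval : ∀ X : Fin n → Fin ℓ, Function.Injective X → Φ (squeeze X) = Ψ X :=
    fun X hX => hΦ X hX (squeeze X) (fun i => squeeze_val X hX hnℓ i)
  set c := fun X : Fin n → Fin ℓ => ((Finset.univ.filter fun p : Fin n × Fin n =>
      p.1 ≠ p.2 ∧ X p.1 = X p.2).card : ℝ) with hc
  set d := fun X : Fin n → Fin ℓ => ((Finset.univ.filter fun p : Fin n × Fin n =>
      p.1 ≠ p.2 ∧ (X p.2 : ℕ) = (X p.1 : ℕ) + 1).card : ℝ) with hd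
  set T := Finset.univ.filter (fun X : Fin n → Fin ℓ =>
    Function.Injective X ∧ Function.Injective (squeeze X)) with hT
  have h1 : ∑ X ∈ T, ‖Ψ X‖ ^ 2 ≤ ∑ A : Fin n → Fin (ℓ - n + 1), ‖Φ A‖ ^ 2 := by
    have hinj : ∀ X ∈ T, ∀ Y ∈ T, squeeze X = squeeze Y → X = Y := by
      intro X hX Y hY h
      rw [hT] at hX hY
      simp only [Finset.mem_filter, Finset.mem_univ, true_and] at hX hY
      exact squeeze_injOn hX.1 hY.1 hX.2 hnℓ h
    have e1 : ∑ A ∈ T.image squeeze, ‖Φ A‖ ^ 2 = ∑ X ∈ T, ‖Φ (squeeze X)‖ ^ 2 :=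
      Finset.sum_image hinj
    have e2 : ∑ X ∈ T, ‖Φ (squeeze X)‖ ^ 2 = ∑ X ∈ T, ‖Ψ X‖ ^ 2 := by
      apply Finset.sum_congr rfl
      intro X hX
      rw [hT] at hX
      simp only [Finset.mem_filter, Finset.mem_univ, true_and] at hX
      rw [hΦval X hX.1]
    rw [← e2, ← e1]
    exact Finset.sum_le_sum_of_subset_of_nonneg (Finset.subset_univ _)
      (fun A _ _ => by positivity)
  have h2 : ∑ X ∈ T, ‖Ψ X‖ ^ 2 +
      ∑ X ∈ Finset.univ.filter (fun X : Fin n → Fin ℓ =>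
        ¬(Function.Injective X ∧ Function.Injective (squeeze X))), ‖Ψ X‖ ^ 2 = 1 := by
    rw [hT, Finset.sum_filter_add_sum_filter_not, hnorm]
  have h3 : ∑ X ∈ Finset.univ.filter (fun X : Fin n → Fin ℓ =>
        ¬(Function.Injective X ∧ Function.Injective (squeeze X))), ‖Ψ X‖ ^ 2 ≤
      (1 / 2) * ∑ X : Fin n → Fin ℓ, ‖Ψ X‖ ^ 2 * c X +
      ∑ X : Fin n → Fin ℓ, ‖Ψ X‖ ^ 2 * d X := by
    have step1 : ∑ X ∈ Finset.univ.filter (fun X : Fin n → Fin ℓ =>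
        ¬(Function.Injective X ∧ Function.Injective (squeeze X))), ‖Ψ X‖ ^ 2 ≤
        ∑ X ∈ Finset.univ.filter (fun X : Fin n → Fin ℓ =>
        ¬(Function.Injective X ∧ Function.Injective (squeeze X))),
          ((1 / 2) * (‖Ψ X‖ ^ 2 * c X) + ‖Ψ X‖ ^ 2 * d X) := by
      apply Finset.sum_le_sum
      intro X hX
      simp only [Finset.mem_filter, Finset.mem_univ, true_and] at hX
      have hc0 : (0 : ℝ) ≤ c X := by simp only [hc]; exact Nat.cast_nonneg _
      have hd0 : (0 : ℝ) ≤ d X := by simp only [hd]; exact Nat.cast_nonneg _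
      have hn0 : (0 : ℝ) ≤ ‖Ψ X‖ ^ 2 := sq_nonneg _
      by_cases hXi : Function.Injective X
      · have hA : ¬ Function.Injective (squeeze X) := fun h => hX ⟨hXi, h⟩
        have hd1 : (1 : ℝ) ≤ d X := by
          simp only [hd]; exact_mod_cast one_le_offdiag_card hXi hA hnℓ
        nlinarith
      · have hc2 : (2 : ℝ) ≤ c X := by
          simp only [hc]; exact_mod_cast two_le_diag_card hXi
        nlinarith
    have step2 : ∑ X ∈ Finset.univ.filter (fun X : Fin n → Fin ℓ =>
        ¬(Function.Injective X ∧ Function.Injective (squeeze X))),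
          ((1 / 2) * (‖Ψ X‖ ^ 2 * c X) + ‖Ψ X‖ ^ 2 * d X) ≤
        ∑ X : Fin n → Fin ℓ, ((1 / 2) * (‖Ψ X‖ ^ 2 * c X) + ‖Ψ X‖ ^ 2 * d X) := by
      apply Finset.sum_le_sum_of_subset_of_nonneg (Finset.subset_univ _)
      intro X _ _
      have hc0 : (0 : ℝ) ≤ c X := by simp only [hc]; exact Nat.cast_nonneg _
      have hd0 : (0 : ℝ) ≤ d X := by simp only [hd]; exact Nat.cast_nonneg _
      have hn0 : (0 : ℝ) ≤ ‖Ψ X‖ ^ 2 := sq_nonneg _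
      have := mul_nonneg hn0 hc0
      have := mul_nonneg hn0 hd0
      nlinarith
    have step3 : ∑ X : Fin n → Fin ℓ, ((1 / 2) * (‖Ψ X‖ ^ 2 * c X) + ‖Ψ X‖ ^ 2 * d X) =
        (1 / 2) * ∑ X : Fin n → Fin ℓ, ‖Ψ X‖ ^ 2 * c X +
        ∑ X : Fin n → Fin ℓ, ‖Ψ X‖ ^ 2 * d X := by
      rw [Finset.sum_add_distrib, ← Finset.mul_sum]
    linarith
  have hr1 : ∑ x ∈ Finset.range ℓ, rho2 Ψ x x = ∑ X : Fin n → Fin ℓ, ‖Ψ X‖ ^ 2 * c X := by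
    rw [rho_diag_sum Ψ]
  have hr2 : ∑ x ∈ Finset.range (ℓ - 1), rho2 Ψ x (x + 1) =
      ∑ X : Fin n → Fin ℓ, ‖Ψ X‖ ^ 2 * d X := by
    rw [rho_offdiag_sum Ψ]
  rw [hr1, hr2]
  linarith

end
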